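/- Let (X_j)_{j≥1} be i.i.d. nonnegative integer-valued random variables with E[X_1]=1 and finite exponential moments, and (Y_j)_{j≥1} i.i.d. nonnegative integer random variables (coupled so that (X_j,Y_j) are i.i.d. pairs) with E[Y_1]=c>0 and finite exponential moments. Then there exist constants A,B>0 such that for all ℓ,n≥1: P( (Σ_{j=1}^ℓ (X_j−1), Σ_{j=2}^ℓ Y_j) = (−1, n) ) ≤ A·exp(−B·|n + c − c·ℓ|/√ℓ). -/

import Mathlib

open MeasureTheory ProbabilityTheory Real Finset

lemma exp_quad_bound {s x t₀ : ℝ} (hx : 0 ≤ x) (ht : |s| ≤ t₀) :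
    exp (s*x) ≤ 1 + s*x + s^2*x^2 * exp (t₀*x) := by
  have hs : s ≤ t₀ := (le_abs_self s).trans ht
  have ht₀ : 0 ≤ t₀ := (abs_nonneg s).trans ht
  have hux : s*x ≤ t₀*x := mul_le_mul_of_nonneg_right hs hx
  have hE : (1:ℝ) ≤ exp (t₀*x) := one_le_exp (by positivity)
  have hsq : s^2*x^2 = (s*x)^2 := (mul_pow s x 2).symm
  by_cases h : |s*x| ≤ 1
  · have hb := Real.exp_bound h (by norm_num : 0 < 2)
    have h4 : ∑ m ∈ Finset.range 2, (s*x)^m / m.factorial = 1 + s*x := by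
      simp [Finset.sum_range_succ]
    rw [h4] at hb
    have h5 : |s*x|^2 * ((Nat.succ 2) / ((Nat.factorial 2 : ℕ) * (2:ℕ))) = (s*x)^2 * (3/4) := by
      rw [sq_abs]; norm_num [Nat.factorial]
    rw [h5] at hb
    have h3 : exp (s*x) - (1 + s*x) ≤ (s*x)^2 * (3/4) := (abs_le.mp hb).2
    nlinarith [sq_nonneg (s*x)]
  · push_neg at h
    rcases le_or_gt (s*x) 0 with hu | hu
    · have h1 : exp (s*x) ≤ 1 := exp_le_one_iff.mpr hu
      have h2 : 1 < -(s*x) := by rw [abs_of_nonpos hu] at h; linarith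
      nlinarith [sq_nonneg (s*x)]
    · have h1 : 1 < s*x := by rwa [abs_of_pos hu] at h
      have h2 : exp (s*x) ≤ exp (t₀*x) := exp_le_exp.mpr hux
      have h3 : (1:ℝ) ≤ (s*x)^2 := by nlinarith
      have h4 : exp (t₀*x) ≤ (s*x)^2 * exp (t₀*x) := by
        nlinarith [exp_pos (t₀*x)]
      nlinarith

theorem pair_local_deviation_bound
    {Ω : Type*} [MeasurableSpace Ω] (μ : Measure Ω) [IsProbabilityMeasure μ]
    (X Y : ℕ → Ω → ℕ) (hXmeas : ∀ j, Measurable (X j)) (hYmeas : ∀ j, Measurable (Y j))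
    (hindep : iIndepFun (fun j ω => (X j ω, Y j ω)) μ)
    (hident : ∀ j, μ.map (fun ω => (X j ω, Y j ω)) = μ.map (fun ω => (X 0 ω, Y 0 ω)))
    (hmeanX : ∫ ω, (X 0 ω : ℝ) ∂μ = 1)
    (c : ℝ) (hc : 0 < c) (hmeanY : ∫ ω, (Y 0 ω : ℝ) ∂μ = c)
    (hexp : ∃ z : ℝ, 1 < z ∧ Integrable (fun ω => z ^ (X 0 ω + Y 0 ω)) μ) :
    ∃ A > (0:ℝ), ∃ B > (0:ℝ), ∀ ℓ n : ℕ, 1 ≤ ℓ → 1 ≤ n →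
      μ {ω | (∑ j ∈ Finset.range ℓ, ((X j ω : ℤ) - 1)) = -1 ∧
             (∑ j ∈ Finset.Ico 1 ℓ, (Y j ω : ℤ)) = (n : ℤ)} ≤
        ENNReal.ofReal
          (A * Real.exp (-B * |(n : ℝ) + c - c * ℓ| / Real.sqrt ℓ)) := by
  classical
  obtain ⟨z, hz, hint⟩ := hexp
  have hz0 : (0:ℝ) < z := lt_trans one_pos hz
  set t₀ : ℝ := Real.log z / 3 with ht₀def
  have ht₀ : 0 < t₀ := by
    have := Real.log_pos hz; positivity
  -- the real-valued Y variables
  set W : ℕ → Ω → ℝ := fun j ω => (Y j ω : ℝ) with hWdef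
  have hWmeas : ∀ j, Measurable (W j) := fun j =>
    measurable_from_nat.comp (hYmeas j)
  have hpairmeas : ∀ j, Measurable (fun ω => (X j ω, Y j ω)) := fun j =>
    (hXmeas j).prodMk (hYmeas j)
  have hWindep : iIndepFun W μ := by
    have := hindep.comp (fun _ (p : ℕ × ℕ) => (p.2 : ℝ))
      (fun _ => measurable_from_nat.comp measurable_snd)
    exact this
  have hWident : ∀ j, μ.map (W j) = μ.map (W 0) := by
    intro j
    have h1 : W j = (fun p : ℕ × ℕ => (p.2 : ℝ)) ∘ (fun ω => (X j ω, Y j ω)) := rfl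
    have hm : Measurable (fun p : ℕ × ℕ => (p.2 : ℝ)) :=
      measurable_from_nat.comp measurable_snd
    rw [h1, ← Measure.map_map hm (hpairmeas j), hident j,
      Measure.map_map hm (hpairmeas 0)]
    rfl
  -- exponential bounds on nat casts
  have hzy : ∀ y : ℕ, Real.exp (3 * (t₀ * y)) = z ^ y := by
    intro y
    rw [show 3 * (t₀ * (y:ℝ)) = (y:ℝ) * Real.log z by rw [ht₀def]; ring,
      Real.exp_nat_mul, Real.exp_log hz0]
  have hEle : ∀ y : ℕ, Real.exp (t₀ * y) ≤ z ^ y := by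
    intro y
    rw [← hzy y]
    apply Real.exp_le_exp.mpr
    nlinarith [ht₀, Nat.cast_nonneg (α := ℝ) y, mul_nonneg ht₀.le (Nat.cast_nonneg (α := ℝ) y)]
  have hyle : ∀ y : ℕ, (y:ℝ) ≤ Real.exp (t₀ * y) / t₀ := by
    intro y
    rw [le_div_iff₀ ht₀]
    have := Real.add_one_le_exp (t₀ * y)
    nlinarith [Real.exp_pos (t₀ * y)]
  have hq : ∀ y : ℕ, (y:ℝ)^2 * Real.exp (t₀ * y) ≤ z ^ y / t₀^2 := by
    intro y
    have h1 := hyle y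
    have h2 : (y:ℝ)^2 ≤ (Real.exp (t₀ * y))^2 / t₀^2 := by
      have h2a : (y:ℝ)^2 ≤ (Real.exp (t₀*y)/t₀)^2 := by
        apply sq_le_sq' _ h1
        nlinarith [Nat.cast_nonneg (α := ℝ) y, (Real.exp_pos (t₀*y)).le, ht₀]
      have h2b : (Real.exp (t₀*y)/t₀)^2 = (Real.exp (t₀*y))^2 / t₀^2 := div_pow _ _ 2
      linarith [h2a, h2b.symm.le, h2b.le]
    calc (y:ℝ)^2 * Real.exp (t₀*y) ≤ ((Real.exp (t₀*y))^2/t₀^2) * Real.exp (t₀*y) := by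
          apply mul_le_mul_of_nonneg_right h2 (Real.exp_pos _).le
      _ = Real.exp (3*(t₀*y)) / t₀^2 := by
          rw [show 3*(t₀*(y:ℝ)) = t₀*y + t₀*y + t₀*y by ring, Real.exp_add, Real.exp_add]
          ring
      _ = z ^ y / t₀^2 := by rw [hzy]
  -- integrability of z^Y0
  have hzY : Integrable (fun ω => z ^ (Y 0 ω)) μ := by
    refine hint.mono' ?_ ?_
    · exact (measurable_from_nat.comp (hYmeas 0)).aestronglyMeasurable
    · filter_upwards with ω
      rw [Real.norm_of_nonneg (by positivity)]
      exact pow_le_pow_right₀ hz.le (Nat.le_add_left _ _)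
  have hIntY : Integrable (fun ω => (Y 0 ω : ℝ)) μ := by
    refine (hzY.div_const t₀).mono' ?_ ?_
    · exact (measurable_from_nat.comp (hYmeas 0)).aestronglyMeasurable
    · filter_upwards with ω
      rw [Real.norm_of_nonneg (Nat.cast_nonneg _)]
      exact (hyle _).trans (by gcongr; exact hEle _)
  have hIntQ : Integrable (fun ω => (Y 0 ω : ℝ)^2 * Real.exp (t₀ * Y 0 ω)) μ := by
    refine (hzY.div_const (t₀^2)).mono' ?_ ?_
    · exact ((measurable_from_nat.comp (hYmeas 0)).pow_const 2).mul
        ((measurable_from_nat.comp (hYmeas 0)).const_mul t₀).exp |>.aestronglyMeasurable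
    · filter_upwards with ω
      rw [Real.norm_of_nonneg (by positivity)]
      exact hq _
  have hIntE : ∀ s : ℝ, |s| ≤ t₀ → Integrable (fun ω => Real.exp (s * W 0 ω)) μ := by
    intro s hs
    refine hzY.mono' ?_ ?_
    · exact ((hWmeas 0).const_mul s).exp.aestronglyMeasurable
    · filter_upwards with ω
      rw [Real.norm_of_nonneg (Real.exp_pos _).le]
      refine le_trans ?_ (hEle (Y 0 ω))
      apply Real.exp_le_exp.mpr
      exact mul_le_mul_of_nonneg_right ((le_abs_self s).trans hs) (Nat.cast_nonneg _)
  -- the constants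
  set g : ℝ := ∫ ω, (Y 0 ω : ℝ)^2 * Real.exp (t₀ * Y 0 ω) ∂μ with hgdef
  have hg : 0 ≤ g := integral_nonneg (fun ω => by positivity)
  set K : ℝ := g + 1 with hKdef
  have hK : 0 < K := by positivity
  -- mgf bound
  have hmgf : ∀ s : ℝ, |s| ≤ t₀ → mgf (W 0) μ s ≤ Real.exp (c*s + K*s^2) := by
    intro s hs
    have hb : mgf (W 0) μ s ≤ 1 + s*c + s^2*g := by
      rw [mgf]
      have step : ∫ ω, Real.exp (s * W 0 ω) ∂μ ≤
          ∫ ω, (1 + s * W 0 ω + s^2 * ((W 0 ω)^2 * Real.exp (t₀ * W 0 ω))) ∂μ := by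
        refine integral_mono (hIntE s hs) ?_ ?_
        · refine (integrable_const 1).add ?_ |>.add ?_
          · exact hIntY.const_mul s
          · refine (hIntQ.const_mul (s^2)).congr
              (Filter.Eventually.of_forall fun ω => ?_)
            rfl
        · intro ω
          have := exp_quad_bound (Nat.cast_nonneg (Y 0 ω)) hs
          simpa [hWdef, mul_pow, mul_assoc] using this
      have eq2 : ∫ ω, (1 + s * W 0 ω + s^2 * ((W 0 ω)^2 * Real.exp (t₀ * W 0 ω))) ∂μ
          = 1 + s*c + s^2*g := by
        have hi2 : Integrable (fun ω => s * W 0 ω) μ := hIntY.const_mul s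
        have hi3 : Integrable (fun ω => s^2 * ((W 0 ω)^2 * Real.exp (t₀ * W 0 ω))) μ := by
          refine (hIntQ.const_mul (s^2)).congr
            (Filter.Eventually.of_forall fun ω => ?_)
          rfl
        have e1 : ∫ ω, (1 + s * W 0 ω + s^2 * ((W 0 ω)^2 * Real.exp (t₀ * W 0 ω))) ∂μ
            = (∫ ω, (1 + s * W 0 ω) ∂μ)
              + ∫ ω, s^2 * ((W 0 ω)^2 * Real.exp (t₀ * W 0 ω)) ∂μ := by
          have hi12 : Integrable (fun ω => 1 + s * W 0 ω) μ :=
            (integrable_const 1).add hi2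
          exact integral_add hi12
            ((hIntQ.const_mul (s^2)).congr (Filter.Eventually.of_forall fun ω => rfl))
        have e2 : ∫ ω, (1 + s * W 0 ω) ∂μ = (∫ ω, (1:ℝ) ∂μ) + ∫ ω, s * W 0 ω ∂μ :=
          integral_add (integrable_const 1) hi2
        rw [e1, e2, integral_const, integral_const_mul, integral_const_mul]
        simp only [probReal_univ, measure_univ, ENNReal.toReal_one, smul_eq_mul, one_mul]
        have hWY : ∫ ω, W 0 ω ∂μ = c := hmeanY
        have hgY : ∫ ω, (W 0 ω)^2 * Real.exp (t₀ * W 0 ω) ∂μ = g := rfl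
        rw [hWY, hgY]
      linarith [step.trans_eq eq2]
    calc mgf (W 0) μ s ≤ 1 + s*c + s^2*g := hb
      _ ≤ Real.exp (c*s + K*s^2) := by
        have h1 : 1 + (c*s + g*s^2) ≤ Real.exp (c*s + g*s^2) := by
          linarith [Real.add_one_le_exp (c*s + g*s^2)]
        have h2 : Real.exp (c*s + g*s^2) ≤ Real.exp (c*s + K*s^2) := by
          apply Real.exp_le_exp.mpr; nlinarith [sq_nonneg s]
        nlinarith [sq_nonneg s]
  -- mgf and integrability transported to each index j
  have hmgfj : ∀ (j : ℕ) (s : ℝ), mgf (W j) μ s = mgf (W 0) μ s := by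
    intro j s
    have hgm : AEStronglyMeasurable (fun x : ℝ => Real.exp (s * x)) (μ.map (W j)) :=
      ((measurable_id.const_mul s).exp).aestronglyMeasurable
    have hgm0 : AEStronglyMeasurable (fun x : ℝ => Real.exp (s * x)) (μ.map (W 0)) :=
      ((measurable_id.const_mul s).exp).aestronglyMeasurable
    have h1 : mgf (W j) μ s = ∫ x, Real.exp (s * x) ∂(μ.map (W j)) :=
      (integral_map (hWmeas j).aemeasurable hgm).symm
    have h2 : mgf (W 0) μ s = ∫ x, Real.exp (s * x) ∂(μ.map (W 0)) :=
      (integral_map (hWmeas 0).aemeasurable hgm0).symm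
    rw [h1, h2, hWident j]
  have hIntEj : ∀ (j : ℕ) (s : ℝ), |s| ≤ t₀ →
      Integrable (fun ω => Real.exp (s * W j ω)) μ := by
    intro j s hs
    have hgm : AEStronglyMeasurable (fun x : ℝ => Real.exp (s * x)) (μ.map (W j)) :=
      ((measurable_id.const_mul s).exp).aestronglyMeasurable
    have hgm0 : AEStronglyMeasurable (fun x : ℝ => Real.exp (s * x)) (μ.map (W 0)) :=
      ((measurable_id.const_mul s).exp).aestronglyMeasurable
    have h1 : Integrable (fun x : ℝ => Real.exp (s * x)) (μ.map (W 0)) := by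
      rw [integrable_map_measure hgm0 (hWmeas 0).aemeasurable]
      exact hIntE s hs
    have h2 : Integrable (fun x : ℝ => Real.exp (s * x)) (μ.map (W j)) := by
      rw [hWident j]; exact h1
    exact (integrable_map_measure hgm (hWmeas j).aemeasurable).mp h2
  -- choice of constants
  set B : ℝ := min t₀ (1 / (2 * K)) / 2 with hBdef
  have hmin : 0 < min t₀ (1 / (2 * K)) := lt_min ht₀ (by positivity)
  have hB : 0 < B := by positivity
  refine ⟨Real.exp B, Real.exp_pos B, B, hB, ?_⟩
  intro ℓ n hℓ hn
  set m : ℕ := ℓ - 1 with hmdef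
  have hmℓ : (ℓ : ℝ) = (m : ℝ) + 1 := by
    have h' : m + 1 = ℓ := Nat.succ_pred_eq_of_pos hℓ
    exact_mod_cast h'.symm
  have hmleℓ : (m : ℝ) ≤ (ℓ : ℝ) := by rw [hmℓ]; linarith
  have hℓ1 : (1 : ℝ) ≤ (ℓ : ℝ) := by exact_mod_cast hℓ
  set S : Ω → ℝ := fun ω => ∑ j ∈ Finset.Ico 1 ℓ, W j ω with hSdef
  have hsub : {ω | (∑ j ∈ Finset.range ℓ, ((X j ω : ℤ) - 1)) = -1 ∧
      (∑ j ∈ Finset.Ico 1 ℓ, (Y j ω : ℤ)) = (n : ℤ)} ⊆ {ω | S ω = (n : ℝ)} := by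
    intro ω hω
    obtain ⟨-, h2⟩ := hω
    have h3 := congrArg (fun q : ℤ => (q : ℝ)) h2
    push_cast at h3
    simpa [hSdef, hWdef] using h3
  have hcardm : (Finset.Ico 1 ℓ).card = m := by rw [Nat.card_Ico]
  have hmgfS : ∀ s : ℝ, mgf S μ s = mgf (W 0) μ s ^ m := by
    intro s
    have hsum : S = ∑ j ∈ Finset.Ico 1 ℓ, W j := by
      funext ω; simp [hSdef, Finset.sum_apply]
    rw [hsum, hWindep.mgf_sum hWmeas,
      Finset.prod_congr rfl (fun j _ => hmgfj j s), Finset.prod_const, hcardm]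
  have hIntS : ∀ s : ℝ, |s| ≤ t₀ → Integrable (fun ω => Real.exp (s * S ω)) μ := by
    intro s hs
    have := hWindep.integrable_exp_mul_sum hWmeas
      (s := Finset.Ico 1 ℓ) (fun j _ => hIntEj j s hs)
    simpa [hSdef, Finset.sum_apply] using this
  -- Chernoff bounds
  have hup : ∀ s : ℝ, 0 ≤ s → s ≤ t₀ →
      (μ {ω | (n : ℝ) ≤ S ω}).toReal ≤
        Real.exp (-(s * ((n : ℝ) - c * m)) + m * (K * s ^ 2)) := by
    intro s hs0 hs1
    have habs : |s| ≤ t₀ := by rwa [abs_of_nonneg hs0]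
    have h1 := measure_ge_le_exp_mul_mgf (X := S) (μ := μ) (n : ℝ) hs0 (hIntS s habs)
    calc (μ {ω | (n : ℝ) ≤ S ω}).toReal
        ≤ Real.exp (-s * n) * mgf S μ s := h1
      _ ≤ Real.exp (-s * n) * Real.exp (c * s + K * s ^ 2) ^ m := by
          refine mul_le_mul_of_nonneg_left ?_ (Real.exp_pos _).le
          rw [hmgfS s]
          exact pow_le_pow_left₀ mgf_nonneg (hmgf s habs) m
      _ = Real.exp (-(s * ((n : ℝ) - c * m)) + m * (K * s ^ 2)) := by
          rw [← Real.exp_nat_mul, ← Real.exp_add]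
          congr 1
          ring
  have hlo : ∀ s : ℝ, 0 ≤ s → s ≤ t₀ →
      (μ {ω | S ω ≤ (n : ℝ)}).toReal ≤
        Real.exp (-(s * (c * m - (n : ℝ))) + m * (K * s ^ 2)) := by
    intro s hs0 hs1
    have habs : |(-s)| ≤ t₀ := by rwa [abs_neg, abs_of_nonneg hs0]
    have h1 := measure_le_le_exp_mul_mgf (X := S) (μ := μ) (n : ℝ)
      (neg_nonpos.mpr hs0) (hIntS (-s) habs)
    calc (μ {ω | S ω ≤ (n : ℝ)}).toReal
        ≤ Real.exp (-(-s) * n) * mgf S μ (-s) := h1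
      _ ≤ Real.exp (-(-s) * n) * Real.exp (c * (-s) + K * (-s) ^ 2) ^ m := by
          refine mul_le_mul_of_nonneg_left ?_ (Real.exp_pos _).le
          rw [hmgfS (-s)]
          exact pow_le_pow_left₀ mgf_nonneg (hmgf (-s) habs) m
      _ = Real.exp (-(s * (c * m - (n : ℝ))) + m * (K * s ^ 2)) := by
          rw [← Real.exp_nat_mul, ← Real.exp_add]
          congr 1
          ring
  have hd : (n : ℝ) + c - c * ℓ = (n : ℝ) - c * m := by rw [hmℓ]; ring
  rw [hd]
  set D : ℝ := |(n : ℝ) - c * m| with hDdef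
  have hD0 : 0 ≤ D := abs_nonneg _
  have hP : ∀ s : ℝ, 0 ≤ s → s ≤ t₀ →
      (μ {ω | S ω = (n : ℝ)}).toReal ≤ Real.exp (-(s * D) + m * (K * s ^ 2)) := by
    intro s hs0 hs1
    rcases le_total (c * m) (n : ℝ) with hcase | hcase
    · have hDeq : D = (n : ℝ) - c * m := abs_of_nonneg (by linarith)
      have hmono : μ {ω | S ω = (n : ℝ)} ≤ μ {ω | (n : ℝ) ≤ S ω} :=
        measure_mono (fun ω h => h.ge)
      refine le_trans (ENNReal.toReal_mono (measure_ne_top _ _) hmono) ?_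
      rw [hDeq]
      exact hup s hs0 hs1
    · have hDeq : D = c * m - (n : ℝ) := by
        rw [hDdef, abs_of_nonpos (by linarith)]; ring
      have hmono : μ {ω | S ω = (n : ℝ)} ≤ μ {ω | S ω ≤ (n : ℝ)} :=
        measure_mono (fun ω h => h.le)
      refine le_trans (ENNReal.toReal_mono (measure_ne_top _ _) hmono) ?_
      rw [hDeq]
      exact hlo s hs0 hs1
  have hsqpos : 0 < Real.sqrt ℓ := Real.sqrt_pos.mpr (by linarith)
  have hsq1 : (1 : ℝ) ≤ Real.sqrt ℓ := by
    rw [show (1:ℝ) = Real.sqrt 1 by simp]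
    exact Real.sqrt_le_sqrt hℓ1
  rcases le_or_gt D (Real.sqrt ℓ) with hDcase | hDcase
  · -- trivial regime
    have h1 : (1 : ℝ) ≤ Real.exp B * Real.exp (-B * D / Real.sqrt ℓ) := by
      rw [← Real.exp_add, ← Real.exp_zero]
      apply Real.exp_le_exp.mpr
      have hdiv : D / Real.sqrt ℓ ≤ 1 := (div_le_one hsqpos).mpr hDcase
      have hdiv0 : 0 ≤ D / Real.sqrt ℓ := div_nonneg hD0 hsqpos.le
      have : -B * D / Real.sqrt ℓ = -(B * (D / Real.sqrt ℓ)) := by ring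
      rw [this]
      nlinarith
    calc μ _ ≤ 1 := prob_le_one
      _ ≤ ENNReal.ofReal (Real.exp B * Real.exp (-B * D / Real.sqrt ℓ)) := by
          rw [← ENNReal.ofReal_one]
          exact ENNReal.ofReal_le_ofReal h1
  · -- large-deviation regime
    have hDpos : 0 < D := lt_trans hsqpos hDcase
    set mR : ℝ := max (m : ℝ) 1 with hmRdef
    have hmR0 : 0 < mR := lt_max_of_lt_right one_pos
    have hmRℓ : mR ≤ (ℓ : ℝ) := max_le hmleℓ hℓ1
    have hden2 : (0:ℝ) < 2 * K * mR := mul_pos (mul_pos two_pos hK) hmR0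
    set s : ℝ := min t₀ (D / (2 * K * mR)) with hsdef
    have hs0 : 0 < s := lt_min ht₀ (div_pos hDpos hden2)
    have hs1 : s ≤ t₀ := min_le_left _ _
    have key1 : (m : ℝ) * (K * s ^ 2) ≤ s * D / 2 := by
      have h1 : (m : ℝ) ≤ mR := le_max_left _ _
      have h2 : s ≤ D / (2 * K * mR) := min_le_right _ _
      have h3 : s * (2 * K * mR) ≤ D := (le_div_iff₀ hden2).mp h2
      calc (m : ℝ) * (K * s ^ 2) ≤ mR * (K * s ^ 2) :=
            mul_le_mul_of_nonneg_right h1 (mul_nonneg hK.le (sq_nonneg s))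
        _ = (s * (2 * K * mR)) * (s / 2) := by ring
        _ ≤ D * (s / 2) := mul_le_mul_of_nonneg_right h3 (by linarith)
        _ = s * D / 2 := by ring
    have key2 : 2 * B / Real.sqrt ℓ ≤ s := by
      have e2B : 2 * B = min t₀ (1 / (2 * K)) := by rw [hBdef]; ring
      rw [e2B]
      apply le_min
      · calc min t₀ (1 / (2 * K)) / Real.sqrt ℓ
            ≤ min t₀ (1 / (2 * K)) := div_le_self hmin.le hsq1
          _ ≤ t₀ := min_le_left _ _
      · have hnum : min t₀ (1 / (2 * K)) ≤ 1 / (2 * K) := min_le_right _ _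
        have step1 : min t₀ (1 / (2 * K)) / Real.sqrt ℓ ≤ (1 / (2 * K)) / Real.sqrt ℓ := by
          gcongr
        refine step1.trans ?_
        rw [div_le_div_iff₀ hsqpos hden2]
        have hsq : Real.sqrt ℓ * Real.sqrt ℓ = (ℓ : ℝ) :=
          Real.mul_self_sqrt (by linarith)
        have hDsq : (ℓ : ℝ) ≤ D * Real.sqrt ℓ := by
          calc (ℓ : ℝ) = Real.sqrt ℓ * Real.sqrt ℓ := hsq.symm
            _ ≤ D * Real.sqrt ℓ := by
                apply mul_le_mul_of_nonneg_right hDcase.le hsqpos.le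
        have h6 : mR ≤ D * Real.sqrt ℓ := hmRℓ.trans hDsq
        calc 1 / (2 * K) * (2 * K * mR) = mR := by field_simp
          _ ≤ D * Real.sqrt ℓ := h6
    have hPs := hP s hs0.le hs1
    have hexp_le : Real.exp (-(s * D) + (m : ℝ) * (K * s ^ 2)) ≤
        Real.exp (-B * D / Real.sqrt ℓ) := by
      apply Real.exp_le_exp.mpr
      have h4 : (2 * B / Real.sqrt ℓ) * D ≤ s * D :=
        mul_le_mul_of_nonneg_right key2 hD0
      have h5 : -B * D / Real.sqrt ℓ = -((2 * B / Real.sqrt ℓ) * D) / 2 := by ring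
      rw [h5]
      linarith
    calc μ _ ≤ μ {ω | S ω = (n : ℝ)} := measure_mono hsub
      _ = ENNReal.ofReal ((μ {ω | S ω = (n : ℝ)}).toReal) :=
          (ENNReal.ofReal_toReal (measure_ne_top _ _)).symm
      _ ≤ ENNReal.ofReal (Real.exp B * Real.exp (-B * D / Real.sqrt ℓ)) := by
          apply ENNReal.ofReal_le_ofReal
          refine (hPs.trans hexp_le).trans ?_
          calc Real.exp (-B * D / Real.sqrt ℓ)
              = 1 * Real.exp (-B * D / Real.sqrt ℓ) := (one_mul _).symm
            _ ≤ Real.exp B * Real.exp (-B * D / Real.sqrt ℓ) :=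
              mul_le_mul_of_nonneg_right (Real.one_le_exp hB.le) (Real.exp_pos _).le
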